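/- Let p be a prime, a ≥ 1, and n = p^a. For any c : Fin n → ℤ, the determinant of the circulant matrix of c is congruent modulo p to the sum of the entries: det(circulant c) ≡ c 0 + c 1 + ⋯ + c (n−1) (mod p). In particular, if the entries sum to 1 then det(circulant c) ≡ 1 (mod p). -/

import Mathlib

open Matrix Polynomial
open Fin.NatCast

theorem zmod_circulant_det (p a : ℕ) [Fact p.Prime] (n : ℕ) (hn : n = p ^ a)
    (d : Fin n → ZMod p) : (Matrix.circulant d).det = ∑ i, d i := by
  have hp : p.Prime := Fact.out
  have hn0 : n ≠ 0 := by subst hn; exact pow_ne_zero a hp.ne_zero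
  haveI : NeZero n := ⟨hn0⟩
  set s : ZMod p := ∑ i, d i with hs
  set e : Fin n → ZMod p := d - Pi.single (0 : Fin n) s with he
  have hse : ∑ i, e i = 0 := by
    simp [he, hs, Finset.sum_sub_distrib, Pi.single_apply, Finset.sum_ite_eq']
  set M : Matrix (Fin n) (Fin n) (ZMod p) := circulant e with hM
  have hsplit : circulant d = s • (1 : Matrix (Fin n) (Fin n) (ZMod p)) + M := by
    have : d = Pi.single (0 : Fin n) s + e := by simp [he]
    rw [this, circulant_add]
    congr 1
    ext i j
    simp [circulant_apply, Pi.single_apply, Matrix.smul_apply, Matrix.one_apply, sub_eq_zero]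
  -- powers of the shift matrix
  set P : Matrix (Fin n) (Fin n) (ZMod p) := circulant (Pi.single 1 1) with hP
  have hpow : ∀ k : ℕ, P ^ k = circulant (Pi.single ((k : Fin n)) 1) := by
    intro k
    induction k with
    | zero => simp [circulant_single_one]
    | succ k ih =>
      rw [pow_succ, ih, hP, circulant_mul, circulant_inj]
      funext i
      have : (circulant (Pi.single ((k : Fin n)) 1) *ᵥ (Pi.single 1 1 : Fin n → ZMod p)) i
          = (Pi.single ((k : Fin n)) 1 : Fin n → ZMod p) (i - 1) := by
        simp [mulVec, dotProduct, circulant_apply, Pi.single_apply, mul_ite,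
          Finset.sum_ite_eq']
      rw [this]
      simp [Pi.single_apply, sub_eq_iff_eq_add]
  have hPn : P ^ n = 1 := by
    rw [hpow n]
    simp [Fin.natCast_self, circulant_single_one]
  -- polynomial realization
  set f : (ZMod p)[X] := ∑ k : Fin n, C (e k) * X ^ (k : ℕ) with hf
  have haeval : aeval P f = M := by
    rw [hf, map_sum]
    have : ∀ k : Fin n, aeval P (C (e k) * X ^ (k : ℕ)) = circulant (Pi.single k (e k)) := by
      intro k
      rw [_root_.map_mul, aeval_C, map_pow, aeval_X, hpow, Fin.cast_val_eq_self]
      ext i j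
      simp only [circulant_apply, Pi.single_apply, Matrix.mul_apply,
        Matrix.algebraMap_matrix_apply, mul_ite, mul_one, mul_zero, ite_mul, zero_mul,
        Algebra.algebraMap_self_apply]
      rw [Finset.sum_eq_single i] <;> simp +contextual [eq_comm]
    simp_rw [this]
    rw [hM]
    ext i j
    simp [Matrix.sum_apply, circulant_apply, Pi.single_apply, Finset.sum_ite_eq']
  have hfrob : f ^ p ^ a = expand (ZMod p) (p ^ a) f := by
    have h := Polynomial.map_iterateFrobenius_expand (p := p) f a
    have hid : iterateFrobenius (ZMod p) p a = RingHom.id _ := by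
      ext x; simp [iterateFrobenius_def, ZMod.pow_card_pow]
    rwa [hid, Polynomial.map_id, eq_comm] at h
  have hMn : M ^ n = 0 := by
    have hfn : f ^ n = expand (ZMod p) (p ^ a) f := by rw [hn]; exact hfrob
    have hPn' : P ^ p ^ a = 1 := by rw [← hn]; exact hPn
    rw [← haeval, ← _root_.map_pow, hfn, expand_aeval, hPn']
    rw [hf, map_sum]
    have : ∀ k : Fin n, aeval (1 : Matrix (Fin n) (Fin n) (ZMod p)) (C (e k) * X ^ (k : ℕ))
        = e k • 1 := by
      intro k
      rw [_root_.map_mul, aeval_C, map_pow, aeval_X, one_pow]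
      simp [Algebra.algebraMap_eq_smul_one]
    simp_rw [this, ← Finset.sum_smul, hse, zero_smul]
  -- charpoly of nilpotent is X^n
  have hchar : M.charpoly = X ^ n := by
    have h := Matrix.isNilpotent_charpoly_sub_pow_of_isNilpotent (M := M) ⟨n, hMn⟩
    have h0 : M.charpoly - X ^ (Fintype.card (Fin n)) = 0 := h.eq_zero
    rw [Fintype.card_fin] at h0
    exact sub_eq_zero.mp h0
  -- determinant computation
  have hev : Polynomial.eval (-s) M.charpoly = (-s) ^ n := by rw [hchar, eval_pow, eval_X]
  have hmap : (charmatrix M).map (Polynomial.evalRingHom (-s)) = (-s) • 1 - M := by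
    ext i j
    by_cases h : i = j
    · subst h; simp [charmatrix_apply_eq]
    · simp [charmatrix_apply_ne _ _ _ h, Matrix.one_apply_ne h]
  have hdet : Polynomial.eval (-s) M.charpoly = ((-s) • (1 : Matrix (Fin n) (Fin n) (ZMod p)) - M).det := by
    rw [hmap.symm, Matrix.charpoly, ← Polynomial.coe_evalRingHom, RingHom.map_det,
      RingHom.mapMatrix_apply]
  have hneg : (-s) • (1 : Matrix (Fin n) (Fin n) (ZMod p)) - M = -(s • 1 + M) := by
    rw [neg_add, ← neg_smul, sub_eq_add_neg]
  have : (-s) ^ n = ((-1 : ZMod p)) ^ n * (circulant d).det := by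
    rw [← hev, hdet, hneg, Matrix.det_neg, Fintype.card_fin, ← hsplit]
  have hne : ((-1 : ZMod p)) ^ n ≠ 0 := pow_ne_zero _ (neg_ne_zero.mpr one_ne_zero)
  have hdd : (circulant d).det = s ^ n := by
    have h2 : ((-1 : ZMod p)) ^ n * (circulant d).det = ((-1 : ZMod p)) ^ n * s ^ n := by
      rw [← this, neg_pow]
    exact mul_left_cancel₀ hne h2
  rw [hdd, hn, ZMod.pow_card_pow]

theorem circulant_det_modeq_sum (p a : ℕ) (hp : p.Prime) (ha : 1 ≤ a)
    (n : ℕ) (hn : n = p ^ a) (c : Fin n → ℤ) :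
    ((Matrix.circulant c).det ≡ (∑ i, c i) [ZMOD (p : ℤ)]) ∧
      ((∑ i, c i) = 1 → (Matrix.circulant c).det ≡ 1 [ZMOD (p : ℤ)]) := by
  haveI : Fact p.Prime := ⟨hp⟩
  have main : (Matrix.circulant c).det ≡ (∑ i, c i) [ZMOD (p : ℤ)] := by
    rw [← ZMod.intCast_eq_intCast_iff]
    have h1 : (((Matrix.circulant c).det : ℤ) : ZMod p)
        = (Matrix.circulant (fun i => ((c i : ℤ) : ZMod p))).det := by
      rw [show (((Matrix.circulant c).det : ℤ) : ZMod p)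
          = (Int.castRingHom (ZMod p)) (Matrix.circulant c).det from rfl,
        RingHom.map_det]
      congr 1
    rw [h1, zmod_circulant_det p a n hn]
    push_cast
    rfl
  exact ⟨main, fun h => h ▸ main⟩
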